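/- A weak higher dimensional transition system X = (S, μ : L → Σ, T) satisfies CSA1 if and only if X is orthogonal to the canonical morphism D[a] → C_1[a] for every a ∈ Σ, i.e. every morphism D[a] → X factors uniquely through D[a] → C_1[a]. -/

import Mathlib

variable {S L Λ : Type*}

/-- The Multiset axiom: the set of transitions is closed under permutations of
the list of actions. -/
def MultisetAxiom (T : S → List L → S → Prop) : Prop :=
  ∀ (α β : S) (l l' : List L), l.Perm l' → T α l β → T α l' β

/-- The Coherence axiom. -/
def CoherenceAxiom (T : S → List L → S → Prop) : Prop :=
  ∀ (α β ν₁ ν₂ : S) (l₁ l₂ l₃ : List L), l₁ ≠ [] → l₂ ≠ [] → l₃ ≠ [] →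
    T α (l₁ ++ l₂ ++ l₃) β → T α l₁ ν₁ → T ν₁ (l₂ ++ l₃) β →
    T α (l₁ ++ l₂) ν₂ → T ν₂ l₃ β → T ν₁ l₂ ν₂

/-- The first Cattani-Sassone axiom. -/
def CSA1 (μ : L → Λ) (T : S → List L → S → Prop) : Prop :=
  ∀ (α β : S) (u u' : L), T α [u] β → T α [u'] β → μ u = μ u' → u = u'

/-- The Unique intermediate state axiom. -/
def UniqueIntermediate (T : S → List L → S → Prop) : Prop :=
  ∀ (α β : S) (l₁ l₂ : List L), l₁ ≠ [] → l₂ ≠ [] → T α (l₁ ++ l₂) β →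
    ∃! ν, T α l₁ ν ∧ T ν l₂ β
universe u u1 u2 u3 u4 u5 u6

/-- A transition structure over the set of labels `Λ`: a set of states `S`, a
set of actions `L`, a labelling map `μ : L → Λ`, and a set of transitions
`(α, u_1, …, u_n, β)` encoded as `T α [u_1, …, u_n] β`. Weak higher dimensional
transition systems are the transition structures whose transitions have
nonempty lists of actions and satisfying the Multiset and Coherence axioms. -/
structure TransSys (Λ : Type u) where
  /-- the states -/
  S : Type u1
  /-- the actions -/
  L : Type u2
  /-- the labelling map -/
  μ : L → Λ
  /-- the transitions -/
  T : S → List L → S → Prop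

/-- A morphism of (weak higher dimensional) transition systems: a pair of set
maps on states and actions commuting with the labelling maps and taking
transitions to transitions. -/
structure TransSys.Hom {Λ : Type u} (X : TransSys.{u, u1, u2} Λ)
    (Y : TransSys.{u, u3, u4} Λ) where
  /-- the map on states -/
  f0 : X.S → Y.S
  /-- the map on actions -/
  fa : X.L → Y.L
  label : ∀ x, Y.μ (fa x) = X.μ x
  map : ∀ (α : X.S) (l : List X.L) (β : X.S), X.T α l β → Y.T (f0 α) (l.map fa) (f0 β)

/-- Composition of morphisms of transition systems. -/
def TransSys.Hom.comp {Λ : Type u} {X : TransSys.{u, u1, u2} Λ}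
    {Y : TransSys.{u, u3, u4} Λ} {Z : TransSys.{u, u5, u6} Λ}
    (g : Y.Hom Z) (f : X.Hom Y) : X.Hom Z where
  f0 := fun x => g.f0 (f.f0 x)
  fa := fun x => g.fa (f.fa x)
  label := fun x => (g.label (f.fa x)).trans (f.label x)
  map := fun α l β h => by
    have h2 := g.map _ _ _ (f.map α l β h)
    simpa [List.map_map, Function.comp_def] using h2

/-- The set of transitions of the cube `C_n[a_1,…,a_n]`: the states are the
elements of `{0,1}^n`, the actions are the indices `i ∈ {1,…,n}` (the action
`i` standing for the pair `(a_i, i)`, labelled by `a_i`). -/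
@[reducible] def CubeT (n : ℕ) (ε : Fin n → Bool) (l : List (Fin n)) (ε' : Fin n → Bool) :
    Prop :=
  l ≠ [] ∧ l.Nodup ∧ (∀ i, ε i ≤ ε' i) ∧ ∀ i : Fin n, ε i ≠ ε' i ↔ i ∈ l

/-- The cube `C_n[a_1,…,a_n]` as a (weak higher dimensional) transition
system. -/
@[reducible] def cube {Λ : Type u} (n : ℕ) (a : Fin n → Λ) : TransSys.{u, 0, 0} Λ where
  S := Fin n → Bool
  L := Fin n
  μ := a
  T := CubeT n
/-- The weak higher dimensional transition system `D[a]`: two states `0` and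
`1` (encoded by `false` and `true`), two actions `(a,1)` and `(a,2)` (encoded
by `false` and `true`) both labelled by `a`, and the two transitions
`(0,(a,1),1)` and `(0,(a,2),1)`. -/
@[reducible] def dSys {Λ : Type u} (a : Λ) : TransSys.{u, 0, 0} Λ where
  S := Bool
  L := Bool
  μ := fun _ => a
  T := fun α l β => α = false ∧ β = true ∧ (l = [false] ∨ l = [true])

/-- The canonical morphism `D[a] → C_1[a]`: the identity on states, sending
both actions to the unique action `(a,1)` of `C_1[a]`. -/
def dToC {Λ : Type u} (a : Λ) : (dSys a).Hom (cube 1 (fun _ => a)) where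
  f0 := fun b _ => b
  fa := fun _ => 0
  label := fun _ => rfl
  map := fun α l β h => by
    obtain ⟨hα, hβ, hl⟩ := h
    subst hα; subst hβ
    have hmap : l.map (fun _ : Bool => (0 : Fin 1)) = [0] := by
      rcases hl with h | h <;> subst h <;> rfl
    rw [hmap]
    exact ⟨by simp, by simp, fun i => by simp, fun i => by simp [Fin.eq_zero i]⟩


theorem TransSys.Hom.ext' {Λ : Type u} {X : TransSys.{u, u1, u2} Λ}
    {Y : TransSys.{u, u3, u4} Λ} {f g : X.Hom Y}
    (h0 : f.f0 = g.f0) (ha : f.fa = g.fa) : f = g := by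
  cases f; cases g
  simp only at h0 ha
  subst h0; subst ha
  rfl

/-- A weak higher dimensional transition system `X` satisfies CSA1 if and only
if it is orthogonal to the canonical morphism `D[a] → C_1[a]` for every
`a ∈ Σ`, i.e. every morphism `D[a] → X` factors uniquely through
`D[a] → C_1[a]`. -/
theorem csa1_iff_orthogonal_d {Λ : Type u} (X : TransSys.{u, u1, u2} Λ)
    (hne : ∀ α l β, X.T α l β → l ≠ [])
    (hmul : MultisetAxiom X.T) (hcoh : CoherenceAxiom X.T) :
    CSA1 X.μ X.T ↔
      ∀ a : Λ, ∀ f : (dSys a).Hom X,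
        ∃! g : (cube 1 (fun _ => a)).Hom X, g.comp (dToC a) = f := by
  constructor
  · intro hcsa a f
    have t1 : X.T (f.f0 false) [f.fa false] (f.f0 true) := by
      simpa using f.map false [false] true ⟨rfl, rfl, Or.inl rfl⟩
    have t2 : X.T (f.f0 false) [f.fa true] (f.f0 true) := by
      simpa using f.map false [true] true ⟨rfl, rfl, Or.inr rfl⟩
    have hfa : f.fa false = f.fa true :=
      hcsa _ _ _ _ t1 t2 ((f.label false).trans (f.label true).symm)
    refine ⟨⟨fun ε => f.f0 (ε 0), fun _ => f.fa false, fun _ => f.label false,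
      fun ε l ε' h => ?_⟩, ?_, ?_⟩
    · obtain ⟨hl, hnd, hle, hiff⟩ := h
      have hl0 : l = [0] := by
        cases l with
        | nil => exact absurd rfl hl
        | cons x t =>
          have hx : x = 0 := Fin.eq_zero x
          cases t with
          | nil => simp [hx]
          | cons y t' =>
            have hy : y = 0 := Fin.eq_zero y
            subst hx; subst hy
            simp at hnd
      subst hl0
      have h0 : ε 0 ≠ ε' 0 := (hiff 0).mpr (by simp)
      have hb : ε 0 = false ∧ ε' 0 = true := by
        have h1 := hle 0
        revert h1 h0
        cases ε 0 <;> cases ε' 0 <;> decide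
      obtain ⟨he, he'⟩ := hb
      simpa [he, he'] using t1
    · refine TransSys.Hom.ext' rfl ?_
      funext b
      cases b
      · rfl
      · exact hfa
    · intro g' hg'
      have h0 := congrArg TransSys.Hom.f0 hg'
      have ha := congrArg TransSys.Hom.fa hg'
      refine TransSys.Hom.ext' ?_ ?_
      · funext ε
        have hε : ε = fun _ => ε 0 := by
          funext i
          rw [Fin.eq_zero i]
        calc g'.f0 ε = g'.f0 (fun _ => ε 0) := by rw [← hε]
          _ = f.f0 (ε 0) := congrFun h0 (ε 0)
      · funext i
        have hi : i = 0 := Fin.eq_zero i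
        subst hi
        exact congrFun ha false
  · intro h α β u u' t1 t2 hμ
    set a := X.μ u with ha
    let f : (dSys a).Hom X :=
      { f0 := fun b => bif b then β else α
        fa := fun b => bif b then u' else u
        label := fun b => by
          cases b with
          | false => exact rfl
          | true => exact hμ.symm
        map := fun s l t ht => by
          obtain ⟨hs, htt, hl | hl⟩ := ht
          · subst hs; subst htt; subst hl; simpa using t1
          · subst hs; subst htt; subst hl; simpa using t2 }
    obtain ⟨g, hg, -⟩ := h a f
    have hfa := congrArg TransSys.Hom.fa hg
    have e1 : g.fa 0 = u := congrFun hfa false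
    have e2 : g.fa 0 = u' := congrFun hfa true
    rw [← e1, ← e2]
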